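/- Write r = ρ(q−1) + s with 0 ≤ ρ ≤ n−1 and 0 ≤ s < q−1. Then (q−s)q^{n−ρ−1} − 1 has base-q expansion (q−s−1)q^{n−ρ−1} + Σ_{i=0}^{n−ρ−2}(q−1)q^i when ρ ≤ n−2 (and equals q−s−1 when ρ = n−1), and consequently every u with 0 < u < (q−s)q^{n−ρ−1} − 1 satisfies wt_q(u) ≤ n(q−1) − r − 1. -/

import Mathlib

/-- The base-`q` digit sum (`q`-weight) over `n` digit positions. -/
def wtq (q n u : ℕ) : ℕ := ∑ i ∈ Finset.range n, u / q ^ i % q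

lemma geom_sum_q (q : ℕ) (hq : 1 ≤ q) (k : ℕ) :
    ∑ i ∈ Finset.range k, (q - 1) * q ^ i = q ^ k - 1 := by
  induction k with
  | zero => simp
  | succ k ih =>
    rw [Finset.sum_range_succ, ih]
    have h1 : (q - 1) * q ^ k = q * q ^ k - q ^ k := by rw [Nat.sub_mul, one_mul]
    have h2 : q ^ (k + 1) = q * q ^ k := by ring
    have h3 : q ^ k ≤ q * q ^ k := Nat.le_mul_of_pos_left _ (by omega)
    have h4 : 1 ≤ q ^ k := Nat.one_le_pow _ _ (by omega)
    omega

lemma wtq_le (q m v : ℕ) (hq : 1 ≤ q) : wtq q m v ≤ m * (q - 1) := by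
  unfold wtq
  calc ∑ i ∈ Finset.range m, v / q ^ i % q ≤ ∑ i ∈ Finset.range m, (q - 1) := by
        apply Finset.sum_le_sum
        intro i _
        have := Nat.mod_lt (v / q ^ i) (show 0 < q by omega)
        omega
    _ = m * (q - 1) := by simp [Finset.sum_const, Finset.card_range]

lemma wtq_succ (q m v : ℕ) : wtq q (m + 1) v = v % q + wtq q m (v / q) := by
  unfold wtq
  rw [Finset.sum_range_succ']
  simp only [pow_zero, Nat.div_one]
  rw [add_comm]
  congr 1
  apply Finset.sum_congr rfl
  intro i _
  rw [Nat.div_div_eq_div_mul, ← pow_succ']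

lemma wtq_top (q m v c : ℕ) (hq : 1 ≤ q) (_hc : c ≤ q) (hv : v < c * q ^ m) :
    wtq q (m + 1) v ≤ m * (q - 1) + (c - 1) := by
  have hqm : 0 < q ^ m := Nat.pow_pos (by omega)
  have hd : v / q ^ m < c := (Nat.div_lt_iff_lt_mul hqm).mpr hv
  have : v / q ^ m % q ≤ v / q ^ m := Nat.mod_le _ _
  unfold wtq
  rw [Finset.sum_range_succ]
  have := wtq_le q m v hq
  unfold wtq at this
  omega

lemma wtq_key (q : ℕ) (hq : 2 ≤ q) :
    ∀ m v c, 1 ≤ c → c ≤ q → v + 1 < c * q ^ m →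
      wtq q (m + 1) v ≤ m * (q - 1) + (c - 2) := by
  intro m
  induction m with
  | zero =>
    intro v c hc1 hc2 hv
    simp only [pow_zero, mul_one] at hv
    have hvlt : v < q := by omega
    unfold wtq
    simp [Nat.mod_eq_of_lt hvlt]
    omega
  | succ m ih =>
    intro v c hc1 hc2 hv
    rw [wtq_succ]
    have hqm : 0 < q ^ m := Nat.pow_pos (by omega)
    have hpow : c * q ^ (m + 1) = q * (c * q ^ m) := by ring
    have hdiv : v / q + 1 ≤ c * q ^ m := by
      rw [Nat.add_one_le_iff]
      apply Nat.div_lt_of_lt_mul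
      rw [← hpow]; omega
    have hmod : v % q < q := Nat.mod_lt _ (by omega)
    have hvq : v = q * (v / q) + v % q := (Nat.div_add_mod v q).symm ▸ by omega
    have hmul : (m + 1) * (q - 1) = m * (q - 1) + (q - 1) := by ring
    rcases lt_or_eq_of_le hdiv with h | h
    · have := ih (v / q) c hc1 hc2 h
      omega
    · -- v / q = c * q^m - 1
      have hvdq : v / q = c * q ^ m - 1 := Nat.eq_sub_of_add_eq h
      have hcq : 0 < c * q ^ m := Nat.mul_pos (by omega) hqm
      have hle : q ≤ q * (c * q ^ m) := Nat.le_mul_of_pos_right _ hcq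
      have heq : q * (v / q) = q * (c * q ^ m) - q := by
        rw [hvdq, Nat.mul_sub, mul_one]
      have hvmod : v % q < q - 1 := by omega
      have htop : wtq q (m + 1) (v / q) ≤ m * (q - 1) + (c - 1) :=
        wtq_top q m (v / q) c (by omega) hc2 (by omega)
      omega

lemma wtq_ext (q n k u : ℕ) (hq : 1 ≤ q) (hk : k ≤ n) (hu : u < q ^ k) :
    wtq q n u = wtq q k u := by
  unfold wtq
  symm
  apply Finset.sum_subset (Finset.range_subset_range.mpr hk)
  intro i _ hi
  simp only [Finset.mem_range, not_lt] at hi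
  have : q ^ k ≤ q ^ i := Nat.pow_le_pow_right (by omega) hi
  rw [Nat.div_eq_of_lt (by omega)]
  simp

theorem stmt_13 (q n r ρ s : ℕ) (hq : 2 ≤ q) (hρ : ρ ≤ n - 1) (hn : 1 ≤ n)
    (hs : s < q - 1) (hr : r = ρ * (q - 1) + s) :
    (ρ + 2 ≤ n →
      (q - s) * q ^ (n - ρ - 1) - 1
        = (q - s - 1) * q ^ (n - ρ - 1) + ∑ i ∈ Finset.range (n - ρ - 1), (q - 1) * q ^ i) ∧
    (ρ + 1 = n → (q - s) * q ^ (n - ρ - 1) - 1 = q - s - 1) ∧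
    (∀ u, 0 < u → u < (q - s) * q ^ (n - ρ - 1) - 1 → wtq q n u ≤ n * (q - 1) - r - 1) := by
  set m := n - ρ - 1 with hm
  have hnm : n = ρ + 1 + m := by omega
  have hqm : 0 < q ^ m := Nat.pow_pos (by omega)
  have hqs : 2 ≤ q - s := by omega
  refine ⟨?_, ?_, ?_⟩
  · intro _
    rw [geom_sum_q q (by omega) m]
    have h1 : (q - s - 1) * q ^ m = (q - s) * q ^ m - q ^ m := by
      rw [Nat.sub_mul, one_mul]
    have h2 : q ^ m ≤ (q - s) * q ^ m := Nat.le_mul_of_pos_left _ (by omega)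
    omega
  · intro h
    have : m = 0 := by omega
    simp [this]
  · intro u _ hu
    have hkey := wtq_key q hq m u (q - s) (by omega) (by omega) (by omega)
    have hlt : u < q ^ (m + 1) := by
      have : (q - s) * q ^ m ≤ q * q ^ m := Nat.mul_le_mul_right _ (by omega)
      have : q ^ (m + 1) = q * q ^ m := by ring
      omega
    rw [wtq_ext q n (m + 1) u (by omega) (by omega) hlt]
    have hexp : n * (q - 1) = ρ * (q - 1) + (q - 1) + m * (q - 1) := by rw [hnm]; ring
    omega
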